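/- arXiv:1805.00216 — 4 statements merged into one kernel-verified Lean document; each statement's English description precedes it below -/
import Mathlib

section
/- If a mechanism M satisfies (ε,0)-differential privacy, then M satisfies (ε²/2)-zCDP. -/
open Real Set

/-- `tanh x ≤ x` for `x ≥ 0`, in exponential form. -/
lemma aux_tanh {x : ℝ} (hx : 0 ≤ x) :
    Real.exp x - Real.exp (-x) ≤ x * (Real.exp x + Real.exp (-x)) := by
  set G : ℝ → ℝ := fun x => x * (Real.exp x + Real.exp (-x)) - (Real.exp x - Real.exp (-x))
    with hG
  have hder : ∀ t : ℝ, HasDerivAt G (t * (Real.exp t - Real.exp (-t))) t := by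
    intro t
    have h1 : HasDerivAt (fun t : ℝ => Real.exp t) (Real.exp t) t := Real.hasDerivAt_exp t
    have h2 : HasDerivAt (fun t : ℝ => Real.exp (-t)) (-Real.exp (-t)) t := by
      have := (Real.hasDerivAt_exp (-t)).comp t ((hasDerivAt_id t).neg)
      simpa [Function.comp_def] using this
    have h3 : HasDerivAt G
        (1 * (Real.exp t + Real.exp (-t)) + t * (Real.exp t + -Real.exp (-t))
          - (Real.exp t - -Real.exp (-t))) t :=
      (((hasDerivAt_id t).mul (h1.add h2)).sub (h1.sub h2))
    convert h3 using 1
    ring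
  have hmono : MonotoneOn G (Ici (0:ℝ)) := by
    apply monotoneOn_of_deriv_nonneg (convex_Ici 0)
    · exact (Continuous.continuousOn (by continuity))
    · intro t ht
      exact (hder t).differentiableAt.differentiableWithinAt
    · intro t ht
      rw [(hder t).deriv]
      have ht' : 0 < t := by simpa using ht
      have : Real.exp (-t) ≤ Real.exp t := Real.exp_le_exp.mpr (by linarith)
      nlinarith
  have := hmono (self_mem_Ici) hx hx
  simp only [hG] at this
  simp at this
  linarith [this]

/-- Key calculus bound: `log(e^{c(1-t)}+e^{ct}) - log(1+e^c) ≤ c² t(t-1)/2` for `t ≥ 1`, `c ≥ 0`. -/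
lemma aux_calc {c : ℝ} (hc : 0 ≤ c) {t : ℝ} (ht : 1 ≤ t) :
    Real.log (Real.exp (c*(1-t)) + Real.exp (c*t)) - Real.log (1 + Real.exp c)
      ≤ c^2 * (t*(t-1))/2 := by
  set F : ℝ → ℝ := fun t => c^2 * (t*(t-1))/2 - Real.log (Real.exp (c*(1-t)) + Real.exp (c*t))
    with hF
  have hφpos : ∀ u : ℝ, 0 < Real.exp (c*(1-u)) + Real.exp (c*u) := fun u => by positivity
  have hder : ∀ u : ℝ, HasDerivAt F
      (c^2 * (2*u-1)/2 -
        (Real.exp (c*(1-u)) * (-c) + Real.exp (c*u) * c) / (Real.exp (c*(1-u)) + Real.exp (c*u)))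
      u := by
    intro u
    have h1 : HasDerivAt (fun u : ℝ => Real.exp (c*(1-u))) (Real.exp (c*(1-u)) * (-c)) u := by
      have hi : HasDerivAt (fun u : ℝ => c*(1-u)) (-c) u := by
        simpa using (((hasDerivAt_id u).const_sub 1).const_mul c)
      exact (Real.hasDerivAt_exp _).comp u hi
    have h2 : HasDerivAt (fun u : ℝ => Real.exp (c*u)) (Real.exp (c*u) * c) u := by
      have hi : HasDerivAt (fun u : ℝ => c*u) c u := by
        simpa using ((hasDerivAt_id u).const_mul c)
      exact (Real.hasDerivAt_exp _).comp u hi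
    have hlog : HasDerivAt (fun u : ℝ => Real.log (Real.exp (c*(1-u)) + Real.exp (c*u)))
        ((Real.exp (c*(1-u)) * (-c) + Real.exp (c*u) * c) / (Real.exp (c*(1-u)) + Real.exp (c*u)))
        u := (h1.add h2).log (ne_of_gt (hφpos u))
    have hpoly : HasDerivAt (fun u : ℝ => c^2 * (u*(u-1))/2) (c^2 * (2*u-1)/2) u := by
      have : HasDerivAt (fun u : ℝ => u*(u-1)) (1*(u-1) + u*1) u :=
        (hasDerivAt_id u).mul ((hasDerivAt_id u).sub_const 1)
      have := (this.const_mul (c^2)).div_const 2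
      exact this.congr_deriv (by ring)
    exact hpoly.sub hlog
  have hmono : MonotoneOn F (Ici (1:ℝ)) := by
    apply monotoneOn_of_deriv_nonneg (convex_Ici 1)
    · apply ContinuousOn.sub (Continuous.continuousOn (by continuity))
      exact ContinuousOn.log (Continuous.continuousOn (by continuity))
        (fun u _ => ne_of_gt (hφpos u))
    · intro u hu; exact (hder u).differentiableAt.differentiableWithinAt
    · intro u hu
      rw [(hder u).deriv]
      rw [interior_Ici] at hu
      have hu1 : (1:ℝ) < u := hu
      set x := c*(2*u-1)/2 with hx
      have hx0 : 0 ≤ x := by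
        have h2u : (0:ℝ) ≤ 2*u-1 := by linarith
        positivity
      have e1 : c*(1-u) = c/2 + (-x) := by rw [hx]; ring
      have e2 : c*u = c/2 + x := by rw [hx]; ring
      rw [e1, e2, Real.exp_add, Real.exp_add, sub_nonneg, div_le_iff₀ (by positivity)]
      have key := aux_tanh hx0
      have hm : (0:ℝ) < Real.exp (c/2) := Real.exp_pos _
      have hcx : c^2 * (2*u-1)/2 = c * x := by rw [hx]; ring
      rw [hcx]
      have := mul_le_mul_of_nonneg_left key (mul_nonneg hc hm.le)
      nlinarith [this]
  have h1 : F 1 = - Real.log (1 + Real.exp c) := by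
    simp [hF]
  have := hmono (self_mem_Ici) (by exact ht) ht
  rw [h1] at this
  simp only [hF] at this
  linarith

/-- Pointwise convexity bound. -/
lemma aux_pt {ε a p q : ℝ} (hε : 0 < ε) (ha : 1 < a)
    (hq : 0 ≤ q) (h1 : p ≤ Real.exp ε * q) (h2 : q ≤ Real.exp ε * p) :
    p ^ a * q ^ (1-a) ≤
      (Real.exp (ε*a) - Real.exp (-(ε*a))) / (Real.exp ε - Real.exp (-ε)) * p
      + (Real.exp (ε - ε*a) - Real.exp (ε*a - ε)) / (Real.exp ε - Real.exp (-ε)) * q := by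
  set s := Real.exp ε with hs
  set s' := Real.exp (-ε) with hs'
  have hs1 : 1 < s := by rw [hs, ← Real.exp_zero]; exact Real.exp_lt_exp.mpr hε
  have hs'1 : s' < 1 := by rw [hs', ← Real.exp_zero]; exact Real.exp_lt_exp.mpr (by linarith)
  have hs'pos : 0 < s' := Real.exp_pos _
  have hd : 0 < s - s' := by linarith
  have hss' : s' * s = 1 := by rw [hs, hs', ← Real.exp_add]; simp
  have hp : 0 ≤ p := by nlinarith
  rcases eq_or_lt_of_le hq with hq0 | hqpos
  · have hp0 : p = 0 := by nlinarith
    rw [← hq0, hp0, Real.zero_rpow (by positivity)]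
    simp
  · obtain ⟨r, hrq, hrlb, hrub⟩ : ∃ r, r * q = p ∧ s' ≤ r ∧ r ≤ s := by
      refine ⟨p/q, div_mul_cancel₀ p (ne_of_gt hqpos), ?_, ?_⟩
      · rw [le_div_iff₀ hqpos]; nlinarith [mul_le_mul_of_nonneg_left h2 hs'pos.le]
      · rw [div_le_iff₀ hqpos]; linarith
    have hr0 : 0 ≤ r := le_trans hs'pos.le hrlb
    have hlhs : p ^ a * q ^ (1-a) = r ^ a * q := by
      rw [← hrq, Real.mul_rpow hr0 hq, mul_assoc, ← Real.rpow_add hqpos]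
      norm_num
    rw [hlhs, ← hrq]
    have hconv := (convexOn_rpow (le_of_lt ha)).2
      (mem_Ici.mpr hs'pos.le) (mem_Ici.mpr (by positivity : (0:ℝ) ≤ s))
      (div_nonneg (by linarith : (0:ℝ) ≤ s - r) hd.le)
      (div_nonneg (by linarith : (0:ℝ) ≤ r - s') hd.le)
      (by field_simp; ring)
    simp only [smul_eq_mul] at hconv
    have hcomb : (s - r)/(s - s') * s' + (r - s')/(s - s') * s = r := by
      field_simp; ring
    rw [hcomb] at hconv
    have hsa : s ^ a = Real.exp (ε * a) := by rw [hs, ← Real.exp_mul]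
    have hs'a : s' ^ a = Real.exp (-(ε * a)) := by
      rw [hs', ← Real.exp_mul]; ring_nf
    rw [hsa, hs'a] at hconv
    have hfin : (s - r)/(s - s') * Real.exp (-(ε*a)) + (r - s')/(s - s') * Real.exp (ε*a)
        = (Real.exp (ε*a) - Real.exp (-(ε*a))) / (s - s') * r
          + (Real.exp (ε - ε*a) - Real.exp (ε*a - ε)) / (s - s') := by
      have e1 : Real.exp (ε - ε*a) = s * Real.exp (-(ε*a)) := by
        rw [hs, ← Real.exp_add]; ring_nf
      have e2 : Real.exp (ε*a - ε) = s' * Real.exp (ε*a) := by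
        rw [hs', ← Real.exp_add]; ring_nf
      rw [e1, e2]
      field_simp
      ring
    rw [hfin] at hconv
    calc r ^ a * q
        ≤ ((Real.exp (ε*a) - Real.exp (-(ε*a))) / (s - s') * r
            + (Real.exp (ε - ε*a) - Real.exp (ε*a - ε)) / (s - s')) * q :=
          mul_le_mul_of_nonneg_right hconv hq
      _ = _ := by ring

/-- Sum of the two coefficients. -/
lemma aux_AB {ε a : ℝ} (hε : 0 < ε) :
    (Real.exp (ε*a) - Real.exp (-(ε*a))) / (Real.exp ε - Real.exp (-ε))
      + (Real.exp (ε - ε*a) - Real.exp (ε*a - ε)) / (Real.exp ε - Real.exp (-ε))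
      = (Real.exp (ε*(1-a)) + Real.exp (ε*a)) / (1 + Real.exp ε) := by
  have hE1 : (0:ℝ) < Real.exp ε := Real.exp_pos _
  have hE2 : (0:ℝ) < Real.exp (ε*a) := Real.exp_pos _
  have h1 : Real.exp (-ε) = (Real.exp ε)⁻¹ := Real.exp_neg ε
  have h2 : Real.exp (-(ε*a)) = (Real.exp (ε*a))⁻¹ := Real.exp_neg _
  have h3 : Real.exp (ε - ε*a) = Real.exp ε / Real.exp (ε*a) := Real.exp_sub _ _
  have h4 : Real.exp (ε*a - ε) = Real.exp (ε*a) / Real.exp ε := Real.exp_sub _ _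
  have h5 : Real.exp (ε*(1-a)) = Real.exp ε / Real.exp (ε*a) := by
    rw [show ε*(1-a) = ε - ε*a by ring]; exact Real.exp_sub _ _
  have hE1' : 1 < Real.exp ε := by
    rw [← Real.exp_zero]; exact Real.exp_lt_exp.mpr hε
  have hden : Real.exp ε - (Real.exp ε)⁻¹ ≠ 0 := by
    have : (Real.exp ε)⁻¹ < 1 := by
      rw [inv_lt_one_iff₀]; right; exact hE1'
    intro h; nlinarith
  rw [h1, h2, h3, h4, h5]
  rw [← add_div, div_eq_div_iff hden (by positivity : (0:ℝ) < 1 + Real.exp ε).ne']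
  field_simp
  ring

/-- The `α`-Rényi divergence between two (discrete) distributions given by
mass functions `p q`. -/
noncomputable def renyiDiv {Ω : Type*} (a : ℝ) (p q : Ω → ℝ) : ℝ :=
  (a - 1)⁻¹ * Real.log (∑' x, p x ^ a * q x ^ (1 - a))

/-- `ρ`-zero-concentrated differential privacy. -/
def zCDP {D Ω : Type*} (Neighbor : D → D → Prop) (ρ : ℝ) (M : D → Ω → ℝ) : Prop :=
  ∀ X X', Neighbor X X' → ∀ a : ℝ, 1 < a → renyiDiv a (M X) (M X') ≤ ρ * a

/-- If a mechanism `M` satisfies pure `(ε,0)`-differential privacy, then it satisfies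
`(ε²/2)`-zCDP. -/
theorem stmt_4 {D Ω : Type*} [Countable Ω] (Neighbor : D → D → Prop)
    (hsymm : ∀ X X', Neighbor X X' → Neighbor X' X)
    (ε : ℝ) (hε : 0 ≤ ε) (M : D → Ω → ℝ)
    (hprob : ∀ X, (∀ y, 0 ≤ M X y) ∧ ∑' y, M X y = 1)
    (hDP : ∀ X X', Neighbor X X' → ∀ S : Set Ω,
      ∑' y : S, M X y ≤ Real.exp ε * ∑' y : S, M X' y) :
    zCDP Neighbor (ε^2/2) M := by
  intro X X' hN a ha
  obtain ⟨hp0, hp1⟩ := hprob X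
  obtain ⟨hq0, hq1⟩ := hprob X'
  set p := M X with hpdef
  set q := M X' with hqdef
  have hpt1 : ∀ y, p y ≤ Real.exp ε * q y := by
    intro y
    have := hDP X X' hN {y}
    rwa [tsum_singleton, tsum_singleton] at this
  have hpt2 : ∀ y, q y ≤ Real.exp ε * p y := by
    intro y
    have := hDP X' X (hsymm _ _ hN) {y}
    rwa [tsum_singleton, tsum_singleton] at this
  have ha1 : (0:ℝ) < a - 1 := by linarith
  rcases eq_or_lt_of_le hε with hε0 | hεpos
  · -- ε = 0 : the two distributions are equal
    have hpq : p = q := by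
      funext y
      have h1 := hpt1 y
      have h2 := hpt2 y
      rw [← hε0, Real.exp_zero, one_mul] at h1 h2
      linarith
    have hterm : ∀ y, p y ^ a * q y ^ (1-a) = p y := by
      intro y
      rw [← hpq]
      rcases eq_or_lt_of_le (hp0 y) with h | h
      · rw [← h, Real.zero_rpow (by positivity)]; simp
      · rw [← Real.rpow_add h]; norm_num
    rw [renyiDiv, tsum_congr hterm, hp1, Real.log_one, mul_zero, ← hε0]
    norm_num
  · -- ε > 0
    set A := (Real.exp (ε*a) - Real.exp (-(ε*a))) / (Real.exp ε - Real.exp (-ε)) with hA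
    set B := (Real.exp (ε - ε*a) - Real.exp (ε*a - ε)) / (Real.exp ε - Real.exp (-ε)) with hB
    have hpS : Summable p := by
      by_contra h
      rw [tsum_eq_zero_of_not_summable h] at hp1
      norm_num at hp1
    have hqS : Summable q := by
      by_contra h
      rw [tsum_eq_zero_of_not_summable h] at hq1
      norm_num at hq1
    have hfg : ∀ y, p y ^ a * q y ^ (1-a) ≤ A * p y + B * q y := fun y =>
      aux_pt hεpos ha (hq0 y) (hpt1 y) (hpt2 y)
    have hf0 : ∀ y, 0 ≤ p y ^ a * q y ^ (1-a) := fun y =>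
      mul_nonneg (Real.rpow_nonneg (hp0 y) a) (Real.rpow_nonneg (hq0 y) _)
    have hgS : Summable (fun y => A * p y + B * q y) := (hpS.mul_left A).add (hqS.mul_left B)
    have hfS : Summable (fun y => p y ^ a * q y ^ (1-a)) :=
      Summable.of_nonneg_of_le hf0 hfg hgS
    have hsum : ∑' y, p y ^ a * q y ^ (1-a)
        ≤ (Real.exp (ε*(1-a)) + Real.exp (ε*a)) / (1 + Real.exp ε) := by
      calc ∑' y, p y ^ a * q y ^ (1-a) ≤ ∑' y, (A * p y + B * q y) :=
            Summable.tsum_le_tsum hfg hfS hgS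
        _ = A * (∑' y, p y) + B * (∑' y, q y) := by
            rw [Summable.tsum_add (hpS.mul_left A) (hqS.mul_left B), tsum_mul_left, tsum_mul_left]
        _ = A + B := by rw [hp1, hq1]; ring
        _ = _ := aux_AB hεpos
    have hTpos : (0:ℝ) < (Real.exp (ε*(1-a)) + Real.exp (ε*a)) / (1 + Real.exp ε) := by
      positivity
    have hlog : Real.log (∑' y, p y ^ a * q y ^ (1-a)) ≤ ε^2 * (a*(a-1))/2 := by
      rcases eq_or_lt_of_le (tsum_nonneg hf0) with h0 | hSpos
      · rw [← h0, Real.log_zero]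
        positivity
      · calc Real.log (∑' y, p y ^ a * q y ^ (1-a))
            ≤ Real.log ((Real.exp (ε*(1-a)) + Real.exp (ε*a)) / (1 + Real.exp ε)) :=
              Real.log_le_log hSpos hsum
          _ = Real.log (Real.exp (ε*(1-a)) + Real.exp (ε*a)) - Real.log (1 + Real.exp ε) :=
              Real.log_div (by positivity) (by positivity)
          _ ≤ ε^2 * (a*(a-1))/2 := aux_calc hε (le_of_lt ha)
    rw [renyiDiv]
    calc (a-1)⁻¹ * Real.log (∑' y, p y ^ a * q y ^ (1-a))
        ≤ (a-1)⁻¹ * (ε^2 * (a*(a-1))/2) :=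
          mul_le_mul_of_nonneg_left hlog (inv_nonneg.mpr ha1.le)
      _ = ε^2/2 * a := by
          field_simp
end

section
/- The Gaussian mechanism satisfies zCDP: if f : X^n → R^d has ℓ₂-sensitivity Δ, then the mechanism M(X) = f(X) + Z, where Z ~ N(0, (Δ/√(2ρ))² · I), satisfies ρ-zCDP. -/
open MeasureTheory

/-- The density of the spherical Gaussian `N(μ, σ²·I)` on `ℝ^d`. -/
noncomputable def gaussDensity (d : ℕ) (μ : EuclideanSpace ℝ (Fin d)) (σ : ℝ)
    (x : EuclideanSpace ℝ (Fin d)) : ℝ :=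
  ((Real.sqrt (2 * Real.pi * σ^2))⁻¹) ^ d * Real.exp (-‖x - μ‖^2 / (2 * σ^2))

/-- The `α`-Rényi divergence between two distributions on `ℝ^d` with densities `p, q`. -/
noncomputable def renyiDivDensity (d : ℕ) (a : ℝ) (p q : EuclideanSpace ℝ (Fin d) → ℝ) : ℝ :=
  (a - 1)⁻¹ * Real.log (∫ x, p x ^ a * q x ^ (1 - a))

lemma gauss_integral_one (d : ℕ) (μ : EuclideanSpace ℝ (Fin d)) {σ : ℝ} (hσ : 0 < σ) :
    ∫ x : EuclideanSpace ℝ (Fin d), gaussDensity d μ σ x = 1 := by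
  have ht : (0:ℝ) < 2 * Real.pi * σ ^ 2 := by positivity
  have hb : (0:ℝ) < (2 * σ ^ 2)⁻¹ := by positivity
  unfold gaussDensity
  rw [integral_const_mul]
  have htrans : (∫ x : EuclideanSpace ℝ (Fin d), Real.exp (-‖x - μ‖ ^ 2 / (2 * σ ^ 2)))
      = ∫ x : EuclideanSpace ℝ (Fin d), Real.exp (-(2 * σ ^ 2)⁻¹ * ‖x‖ ^ 2) := by
    rw [← integral_sub_right_eq_self (fun x : EuclideanSpace ℝ (Fin d) =>
      Real.exp (-(2 * σ ^ 2)⁻¹ * ‖x‖ ^ 2)) μ]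
    congr 1 with x
    congr 1
    field_simp
  rw [htrans, GaussianFourier.integral_rexp_neg_mul_sq_norm hb, finrank_euclideanSpace_fin]
  have hπb : Real.pi / (2 * σ ^ 2)⁻¹ = 2 * Real.pi * σ ^ 2 := by
    field_simp
  rw [hπb]
  have hsqrt : (Real.sqrt (2 * Real.pi * σ ^ 2))⁻¹ ^ d
      = (2 * Real.pi * σ ^ 2) ^ (-(d / 2 : ℝ)) := by
    rw [Real.sqrt_eq_rpow, ← Real.rpow_neg_one (((2 * Real.pi * σ^2) ^ ((1:ℝ)/2))),
      ← Real.rpow_natCast (((2 * Real.pi * σ^2) ^ ((1:ℝ)/2)) ^ (-1:ℝ)) d,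
      ← Real.rpow_mul (Real.rpow_nonneg ht.le _), ← Real.rpow_mul ht.le]
    congr 1
    ring
  rw [hsqrt, ← Real.rpow_add ht]
  norm_num

open RealInnerProductSpace in
lemma norm_combo_aux {d : ℕ} (a : ℝ) (u v : EuclideanSpace ℝ (Fin d)) :
    a * ‖u‖ ^ 2 + (1 - a) * ‖v‖ ^ 2
      = ‖a • u + (1 - a) • v‖ ^ 2 + a * (1 - a) * ‖v - u‖ ^ 2 := by
  have e1 := norm_add_sq_real (a • u) ((1 - a) • v)
  have e2 := norm_sub_sq_real v u
  simp only [norm_smul, real_inner_smul_left, real_inner_smul_right, mul_pow, sq_abs,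
    Real.norm_eq_abs] at e1
  rw [e1, e2, real_inner_comm v u]
  ring

open RealInnerProductSpace in
lemma norm_combo {d : ℕ} (a : ℝ) (x μ₁ μ₂ : EuclideanSpace ℝ (Fin d)) :
    a * ‖x - μ₁‖ ^ 2 + (1 - a) * ‖x - μ₂‖ ^ 2
      = ‖x - (a • μ₁ + (1 - a) • μ₂)‖ ^ 2 + a * (1 - a) * ‖μ₁ - μ₂‖ ^ 2 := by
  have h1 : x - (a • μ₁ + (1 - a) • μ₂) = a • (x - μ₁) + (1 - a) • (x - μ₂) := by
    module
  have h2 : μ₁ - μ₂ = (x - μ₂) - (x - μ₁) := by abel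
  rw [h1, h2]
  exact norm_combo_aux a (x - μ₁) (x - μ₂)

lemma gauss_pointwise {d : ℕ} (μ₁ μ₂ : EuclideanSpace ℝ (Fin d)) {σ : ℝ} (hσ : 0 < σ) (a : ℝ)
    (x : EuclideanSpace ℝ (Fin d)) :
    gaussDensity d μ₁ σ x ^ a * gaussDensity d μ₂ σ x ^ (1 - a)
      = gaussDensity d (a • μ₁ + (1 - a) • μ₂) σ x
        * Real.exp (a * (a - 1) * ‖μ₁ - μ₂‖ ^ 2 / (2 * σ ^ 2)) := by
  have ht : (0:ℝ) < 2 * Real.pi * σ ^ 2 := by positivity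
  have hC : (0:ℝ) < (Real.sqrt (2 * Real.pi * σ ^ 2))⁻¹ ^ d := by positivity
  have hσ2 : (2 * σ ^ 2) ≠ 0 := by positivity
  unfold gaussDensity
  rw [Real.mul_rpow hC.le (Real.exp_pos _).le, Real.mul_rpow hC.le (Real.exp_pos _).le,
    ← Real.exp_mul, ← Real.exp_mul]
  have hB : ((Real.sqrt (2 * Real.pi * σ ^ 2))⁻¹ ^ d : ℝ) ^ a
      * ((Real.sqrt (2 * Real.pi * σ ^ 2))⁻¹ ^ d : ℝ) ^ (1 - a)
      = (Real.sqrt (2 * Real.pi * σ ^ 2))⁻¹ ^ d := by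
    rw [← Real.rpow_add hC]
    norm_num
  calc ((Real.sqrt (2 * Real.pi * σ^2))⁻¹ ^ d) ^ a * Real.exp (-‖x - μ₁‖ ^ 2 / (2 * σ ^ 2) * a)
        * (((Real.sqrt (2 * Real.pi * σ^2))⁻¹ ^ d) ^ (1 - a)
          * Real.exp (-‖x - μ₂‖ ^ 2 / (2 * σ ^ 2) * (1 - a)))
      = (((Real.sqrt (2 * Real.pi * σ^2))⁻¹ ^ d) ^ a
          * ((Real.sqrt (2 * Real.pi * σ^2))⁻¹ ^ d) ^ (1 - a))
        * (Real.exp (-‖x - μ₁‖ ^ 2 / (2 * σ ^ 2) * a)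
          * Real.exp (-‖x - μ₂‖ ^ 2 / (2 * σ ^ 2) * (1 - a))) := by ring
    _ = ((Real.sqrt (2 * Real.pi * σ^2))⁻¹ ^ d)
        * (Real.exp (-‖x - (a • μ₁ + (1 - a) • μ₂)‖ ^ 2 / (2 * σ ^ 2))
          * Real.exp (a * (a - 1) * ‖μ₁ - μ₂‖ ^ 2 / (2 * σ ^ 2))) := by
        rw [hB, ← Real.exp_add, ← Real.exp_add]
        congr 2
        have hcombo := norm_combo a x μ₁ μ₂
        field_simp
        nlinarith [hcombo]
    _ = ((Real.sqrt (2 * Real.pi * σ^2))⁻¹ ^ d)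
          * Real.exp (-‖x - (a • μ₁ + (1 - a) • μ₂)‖ ^ 2 / (2 * σ ^ 2))
        * Real.exp (a * (a - 1) * ‖μ₁ - μ₂‖ ^ 2 / (2 * σ ^ 2)) := by ring

/-- The Gaussian mechanism satisfies zCDP: if `f` has `ℓ₂`-sensitivity `Δ`, then releasing
`f(X) + N(0, (Δ/√(2ρ))²·I)` satisfies `ρ`-zCDP, i.e. the `α`-Rényi divergence between
the output distributions on neighboring datasets is at most `ρ·α` for all `α > 1`. -/
theorem stmt_5 {D : Type*} (Neighbor : D → D → Prop) (d : ℕ)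
    (f : D → EuclideanSpace ℝ (Fin d)) (Δ ρ : ℝ) (hρ : 0 < ρ) (hΔ : 0 < Δ)
    (hsens : ∀ X X', Neighbor X X' → ‖f X - f X'‖ ≤ Δ) :
    ∀ X X', Neighbor X X' → ∀ a : ℝ, 1 < a →
      renyiDivDensity d a (gaussDensity d (f X) (Δ / Real.sqrt (2 * ρ)))
        (gaussDensity d (f X') (Δ / Real.sqrt (2 * ρ))) ≤ ρ * a := by
  intro X X' hN a ha
  set σ : ℝ := Δ / Real.sqrt (2 * ρ) with hσdef
  have h2ρ : (0:ℝ) < 2 * ρ := by linarith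
  have hσ : 0 < σ := div_pos hΔ (Real.sqrt_pos.mpr h2ρ)
  have hσ2 : σ ^ 2 = Δ ^ 2 / (2 * ρ) := by
    rw [hσdef, div_pow, Real.sq_sqrt h2ρ.le]
  unfold renyiDivDensity
  have hint : (∫ x, gaussDensity d (f X) σ x ^ a * gaussDensity d (f X') σ x ^ (1 - a))
      = Real.exp (a * (a - 1) * ‖f X - f X'‖ ^ 2 / (2 * σ ^ 2)) := by
    have : (∫ x, gaussDensity d (f X) σ x ^ a * gaussDensity d (f X') σ x ^ (1 - a))
        = ∫ x, gaussDensity d (a • f X + (1 - a) • f X') σ x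
            * Real.exp (a * (a - 1) * ‖f X - f X'‖ ^ 2 / (2 * σ ^ 2)) := by
      congr 1 with x
      exact gauss_pointwise (f X) (f X') hσ a x
    rw [this, integral_mul_const, gauss_integral_one d _ hσ, one_mul]
  rw [hint, Real.log_exp]
  have ha1 : (0:ℝ) < a - 1 := by linarith
  have hkey : (a - 1)⁻¹ * (a * (a - 1) * ‖f X - f X'‖ ^ 2 / (2 * σ ^ 2))
      = a * ‖f X - f X'‖ ^ 2 / (2 * σ ^ 2) := by
    field_simp
  rw [hkey]
  have hnorm := hsens X X' hN
  have hnorm2 : ‖f X - f X'‖ ^ 2 ≤ Δ ^ 2 := by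
    have := norm_nonneg (f X - f X')
    nlinarith
  have h2σ : (0:ℝ) < 2 * σ ^ 2 := by positivity
  have hfin : a * Δ ^ 2 / (2 * σ ^ 2) = ρ * a := by
    rw [hσ2]; field_simp
  calc a * ‖f X - f X'‖ ^ 2 / (2 * σ ^ 2) ≤ a * Δ ^ 2 / (2 * σ ^ 2) := by
        gcongr
    _ = ρ * a := hfin
end

section
/- The fingerprinting lemma for Gaussians: for every function f : R^n → [−R, R], if μ is drawn uniformly from [−R, R] and X₁,…,X_n are drawn i.i.d. from N(μ, 1), then E[ (R² − μ²)·(f(X) − μ)·Σ_{i=1}^n (X_i − μ) + (f(X) − μ)² ] ≥ R²/3. -/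
open MeasureTheory

open Real
open scoped ENNReal NNReal

theorem my_lintegral_pi_prod (n : ℕ) (f : Fin n → ℝ → ℝ≥0∞) (hf : ∀ i, Measurable (f i)) :
    ∫⁻ x : Fin n → ℝ, ∏ i, f i (x i) = ∏ i, ∫⁻ x, f i x := by
  induction n with
  | zero => simp [volume_pi]
  | succ n ih =>
    rw [volume_pi, ← ((measurePreserving_piFinSuccAbove
        (fun _ : Fin (n+1) => (volume : Measure ℝ)) 0).symm).lintegral_comp_emb
        (MeasurableEquiv.measurableEmbedding _)]
    simp only [MeasurableEquiv.piFinSuccAbove_symm_apply, Fin.insertNthEquiv,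
      Fin.prod_univ_succ, Fin.insertNth_zero, Equiv.coe_fn_mk, Fin.cons_succ,
      Fin.zero_succAbove, cast_eq, Fin.cons_zero, Function.comp_def]
    rw [show ((volume : Measure ℝ).prod (Measure.pi fun _ : Fin n => (volume : Measure ℝ)))
      = (volume : Measure ℝ).prod (volume : Measure (Fin n → ℝ)) by rw [volume_pi]]
    have h2 : Measurable (fun y : Fin n → ℝ => ∏ i, f i.succ (y i)) :=
      Finset.measurable_prod _ fun i _ => (hf i.succ).comp (measurable_pi_apply i)
    rw [lintegral_prod_mul (hf 0).aemeasurable h2.aemeasurable]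
    rw [ih (fun i => f i.succ) (fun i => hf _)]

theorem my_pi_withDensity (n : ℕ) (d : Fin n → ℝ → ℝ≥0∞) (hd : ∀ i, Measurable (d i))
    [∀ i, SigmaFinite ((volume : Measure ℝ).withDensity (d i))] :
    Measure.pi (fun i => (volume : Measure ℝ).withDensity (d i)) =
    (volume : Measure (Fin n → ℝ)).withDensity (fun x => ∏ i, d i (x i)) := by
  refine Measure.pi_eq fun s hs => ?_
  rw [withDensity_apply _ (MeasurableSet.univ_pi hs),
    ← lintegral_indicator (MeasurableSet.univ_pi hs)]
  have key : ∀ x : Fin n → ℝ, (Set.univ.pi s).indicator (fun x => ∏ i, d i (x i)) x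
      = ∏ i, (s i).indicator (d i) (x i) := by
    intro x
    by_cases hx : x ∈ Set.univ.pi s
    · rw [Set.indicator_of_mem hx]
      exact Finset.prod_congr rfl fun i _ =>
        (Set.indicator_of_mem (hx i (Set.mem_univ i)) _).symm
    · rw [Set.indicator_of_notMem hx]
      have : ∃ i, x i ∉ s i := by
        by_contra hc
        push_neg at hc
        exact hx fun i _ => hc i
      obtain ⟨i, hi⟩ := this
      exact (Finset.prod_eq_zero (Finset.mem_univ i)
        (Set.indicator_of_notMem hi _)).symm
  simp_rw [key]
  rw [my_lintegral_pi_prod n _ (fun i => (hd i).indicator (hs i))]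
  exact Finset.prod_congr rfl fun i _ => by
    rw [lintegral_indicator (hs i), withDensity_apply _ (hs i)]

open ProbabilityTheory in
theorem my_integral_gaussian_pi (n : ℕ) (μ : ℝ) (g : (Fin n → ℝ) → ℝ) :
    ∫ x, g x ∂(Measure.pi fun _ : Fin n => gaussianReal μ 1)
      = ∫ x, (∏ i, gaussianPDFReal μ 1 (x i)) * g x := by
  have h1 : (gaussianReal μ 1) = (volume : Measure ℝ).withDensity (gaussianPDF μ 1) :=
    gaussianReal_of_var_ne_zero μ one_ne_zero
  have hσ : ∀ _i : Fin n, SigmaFinite ((volume : Measure ℝ).withDensity (gaussianPDF μ 1)) := by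
    intro _; rw [← h1]; infer_instance
  rw [show (Measure.pi fun _ : Fin n => gaussianReal μ 1)
      = Measure.pi fun _ : Fin n => (volume : Measure ℝ).withDensity (gaussianPDF μ 1) by
    congr 1; funext _; exact h1]
  rw [@my_pi_withDensity n _ (fun _ => measurable_gaussianPDF μ 1) hσ]
  have h2 : (fun x : Fin n → ℝ => ∏ i, gaussianPDF μ 1 (x i))
      = fun x : Fin n → ℝ => ((∏ i, Real.toNNReal (gaussianPDFReal μ 1 (x i)) : ℝ≥0) : ℝ≥0∞) := by
    funext x
    rw [ENNReal.coe_finset_prod]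
    rfl
  rw [h2]
  have hm : Measurable (fun x : Fin n → ℝ => ∏ i, Real.toNNReal (gaussianPDFReal μ 1 (x i))) :=
    Finset.measurable_prod _ fun i _ => Measurable.real_toNNReal
      ((measurable_gaussianPDFReal μ 1).comp (measurable_pi_apply i))
  rw [integral_withDensity_eq_integral_smul hm g]
  congr 1
  funext x
  rw [NNReal.smul_def, smul_eq_mul, NNReal.coe_prod]
  congr 1
  exact Finset.prod_congr rfl fun i _ =>
    Real.coe_toNNReal _ (gaussianPDFReal_nonneg μ 1 (x i))

open ProbabilityTheory in
theorem my_prod_pdf_eq (n : ℕ) (m : ℝ) (x : Fin n → ℝ) :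
    ∏ i, gaussianPDFReal m 1 (x i)
      = (Real.sqrt (2 * π))⁻¹ ^ n * Real.exp (-(∑ i, (x i - m)^2) / 2) := by
  have : ∀ i : Fin n, gaussianPDFReal m 1 (x i)
      = (Real.sqrt (2 * π))⁻¹ * Real.exp (-(x i - m)^2 / 2) := by
    intro i
    simp [gaussianPDFReal]
  rw [Finset.prod_congr rfl fun i _ => this i, Finset.prod_mul_distrib,
    Finset.prod_const, ← Real.exp_sum]
  congr 1
  · simp [Finset.card_univ]
  · rw [← Finset.sum_div, ← Finset.sum_neg_distrib]

open ProbabilityTheory in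
theorem my_hasDerivAt_pdf (n : ℕ) (x : Fin n → ℝ) (μ : ℝ) :
    HasDerivAt (fun m => ∏ i, gaussianPDFReal m 1 (x i))
      ((∏ i, gaussianPDFReal μ 1 (x i)) * ∑ i, (x i - μ)) μ := by
  have hfun : (fun m => ∏ i, gaussianPDFReal m 1 (x i))
      = fun m => (Real.sqrt (2 * π))⁻¹ ^ n * Real.exp (-(∑ i, (x i - m)^2) / 2) := by
    funext m; exact my_prod_pdf_eq n m x
  rw [hfun, my_prod_pdf_eq n μ x]
  have hq : HasDerivAt (fun m => -(∑ i, (x i - m)^2) / 2) (∑ i, (x i - μ)) μ := by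
    have hS : HasDerivAt (fun m => ∑ i, (x i - m)^2) (∑ i : Fin n, (2 * (x i - μ) * (-1))) μ := by
      apply HasDerivAt.fun_sum
      intro i _
      have h1 : HasDerivAt (fun m : ℝ => x i - m) (-1) μ := (hasDerivAt_id μ).const_sub (x i)
      simpa using h1.fun_pow 2
    have : HasDerivAt (fun m => -(∑ i, (x i - m)^2) / 2) ((-∑ i : Fin n, (2 * (x i - μ) * (-1))) / 2) μ := hS.neg.div_const 2
    convert this using 1
    rw [Finset.sum_congr rfl (fun i _ => by ring : ∀ i ∈ Finset.univ, 2 * (x i - μ) * (-1) = -(2 * (x i - μ)))]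
    rw [Finset.sum_neg_distrib, ← Finset.mul_sum]
    ring
  have : HasDerivAt (fun m => (Real.sqrt (2 * π))⁻¹ ^ n * Real.exp (-(∑ i, (x i - m)^2) / 2)) ((Real.sqrt (2 * π))⁻¹ ^ n * (Real.exp (-(∑ i, (x i - μ)^2) / 2) * ∑ i, (x i - μ))) μ := hq.exp.const_mul _
  convert this using 1
  ring

open ProbabilityTheory

noncomputable def K0 : ℝ := ∫ t : ℝ, |t| * gaussianPDFReal 0 1 t

theorem my_abs_pdf0_int : Integrable (fun t : ℝ => |t| * gaussianPDFReal 0 1 t) := by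
  have h := (integrable_mul_exp_neg_mul_sq (by norm_num : (0:ℝ) < 1/2)).abs
  have h2 := h.const_mul (Real.sqrt (2 * π))⁻¹
  refine h2.congr ?_
  refine Filter.Eventually.of_forall fun t => ?_
  have hpdf : gaussianPDFReal 0 1 t = (Real.sqrt (2 * π))⁻¹ * Real.exp (-t^2 / 2) := by
    simp [gaussianPDFReal]
  show (Real.sqrt (2 * π))⁻¹ * |t * Real.exp (-(1/2) * t^2)| = |t| * gaussianPDFReal 0 1 t
  rw [hpdf, abs_mul, abs_of_pos (Real.exp_pos _), show -(1/2 : ℝ) * t^2 = -t^2/2 by ring]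
  ring

theorem my_abs_pdf_int (μ : ℝ) : Integrable (fun t : ℝ => |t - μ| * gaussianPDFReal μ 1 t) := by
  have h := my_abs_pdf0_int.comp_sub_right μ
  refine h.congr (Filter.Eventually.of_forall fun t => ?_)
  simp only [gaussianPDFReal_sub, zero_add]

theorem my_abs_pdf_val (μ : ℝ) : ∫ t : ℝ, |t - μ| * gaussianPDFReal μ 1 t = K0 := by
  rw [show (fun t : ℝ => |t - μ| * gaussianPDFReal μ 1 t)
      = fun t : ℝ => (fun s => |s| * gaussianPDFReal 0 1 s) (t - μ) by
    funext t; simp only; rw [gaussianPDFReal_sub, zero_add]]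
  rw [integral_sub_right_eq_self (μ := volume) (fun s => |s| * gaussianPDFReal 0 1 s) μ]
  rfl

theorem K0_nonneg : 0 ≤ K0 :=
  integral_nonneg fun t => mul_nonneg (abs_nonneg _) (gaussianPDFReal_nonneg _ _ _)

theorem my_P_int (n : ℕ) (μ : ℝ) :
    Integrable (fun x : Fin n → ℝ => ∏ i, gaussianPDFReal μ 1 (x i)) :=
  Integrable.fintype_prod (f := fun _ : Fin n => gaussianPDFReal μ 1)
    (fun _ => integrable_gaussianPDFReal μ 1)

theorem my_P_val (n : ℕ) (μ : ℝ) :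
    ∫ x : Fin n → ℝ, ∏ i, gaussianPDFReal μ 1 (x i) = 1 := by
  rw [integral_fintype_prod_volume_eq_prod (fun _ => gaussianPDFReal μ 1)]
  simp [integral_gaussianPDFReal_eq_one μ one_ne_zero]

theorem my_Pabs_eq (n : ℕ) (μ : ℝ) (j : Fin n) :
    (fun x : Fin n → ℝ => (∏ i, gaussianPDFReal μ 1 (x i)) * |x j - μ|)
      = fun x : Fin n → ℝ =>
        ∏ i, (fun t : ℝ => gaussianPDFReal μ 1 t * (if i = j then |t - μ| else 1)) (x i) := by
  funext x
  rw [Finset.prod_mul_distrib]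
  congr 1
  rw [Finset.prod_ite_eq' Finset.univ j (fun i => |x i - μ|)]
  simp

theorem my_Pabs_int (n : ℕ) (μ : ℝ) (j : Fin n) :
    Integrable (fun x : Fin n → ℝ => (∏ i, gaussianPDFReal μ 1 (x i)) * |x j - μ|) := by
  rw [my_Pabs_eq n μ j]
  refine Integrable.fintype_prod
    (f := fun i (t : ℝ) => gaussianPDFReal μ 1 t * (if i = j then |t - μ| else 1)) fun i => ?_
  by_cases h : i = j
  · subst h
    simp only [eq_self_iff_true, if_true]
    exact (my_abs_pdf_int μ).congr
      (Filter.Eventually.of_forall fun t => by ring)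
  · simp only [if_neg h, mul_one]
    exact integrable_gaussianPDFReal μ 1

theorem my_Pabs_val (n : ℕ) (μ : ℝ) (j : Fin n) :
    ∫ x : Fin n → ℝ, (∏ i, gaussianPDFReal μ 1 (x i)) * |x j - μ| = K0 := by
  rw [my_Pabs_eq n μ j,
    integral_fintype_prod_volume_eq_prod
      (fun i (t : ℝ) => gaussianPDFReal μ 1 t * (if i = j then |t - μ| else 1))]
  have : ∀ i : Fin n, (∫ t : ℝ, gaussianPDFReal μ 1 t * (if i = j then |t - μ| else 1))
      = if i = j then K0 else 1 := by
    intro i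
    by_cases h : i = j
    · subst h
      simp only [eq_self_iff_true, if_true]
      rw [← my_abs_pdf_val μ]
      congr 1; funext t; ring
    · simp only [if_neg h, mul_one]
      exact integral_gaussianPDFReal_eq_one μ one_ne_zero
  rw [Finset.prod_congr rfl fun i _ => this i,
    Finset.prod_ite_eq' Finset.univ j (fun _ => K0)]
  simp

theorem my_Psum_int (n : ℕ) (μ : ℝ) :
    Integrable (fun x : Fin n → ℝ =>
      (∏ i, gaussianPDFReal μ 1 (x i)) * ∑ j, |x j - μ|) := by
  have : (fun x : Fin n → ℝ => (∏ i, gaussianPDFReal μ 1 (x i)) * ∑ j, |x j - μ|)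
      = fun x => ∑ j, (∏ i, gaussianPDFReal μ 1 (x i)) * |x j - μ| := by
    funext x; rw [Finset.mul_sum]
  rw [this]
  exact integrable_finset_sum _ fun j _ => my_Pabs_int n μ j

theorem my_Psum_val (n : ℕ) (μ : ℝ) :
    ∫ x : Fin n → ℝ, (∏ i, gaussianPDFReal μ 1 (x i)) * ∑ j, |x j - μ| = n * K0 := by
  have : (fun x : Fin n → ℝ => (∏ i, gaussianPDFReal μ 1 (x i)) * ∑ j, |x j - μ|)
      = fun x => ∑ j, (∏ i, gaussianPDFReal μ 1 (x i)) * |x j - μ| := by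
    funext x; rw [Finset.mul_sum]
  rw [this, integral_finset_sum _ fun j _ => my_Pabs_int n μ j]
  simp [my_Pabs_val n μ]

theorem my_P_meas (n : ℕ) :
    Measurable (fun q : ℝ × (Fin n → ℝ) => ∏ i, gaussianPDFReal q.1 1 (q.2 i)) := by
  refine Finset.measurable_prod _ fun i _ => ?_
  have : (fun q : ℝ × (Fin n → ℝ) => gaussianPDFReal q.1 1 (q.2 i))
      = fun q : ℝ × (Fin n → ℝ) => gaussianPDFReal 0 1 (q.2 i - q.1) := by
    funext q
    rw [gaussianPDFReal_sub, zero_add]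
  rw [this]
  exact (measurable_gaussianPDFReal 0 1).comp
    (((measurable_pi_apply i).comp measurable_snd).sub measurable_fst)

theorem my_P_nonneg (n : ℕ) (μ : ℝ) (x : Fin n → ℝ) :
    0 ≤ ∏ i, gaussianPDFReal μ 1 (x i) :=
  Finset.prod_nonneg fun i _ => gaussianPDFReal_nonneg _ _ _

theorem my_main_integrable (n : ℕ) (R : ℝ) (F : ℝ → (Fin n → ℝ) → ℝ)
    (hF : Measurable (Function.uncurry F)) (c₁ c₂ : ℝ)
    (hbound : ∀ μ ∈ Set.Icc (-R) R, ∀ x, |F μ x| ≤ c₁ * (∑ j, |x j - μ|) + c₂) :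
    Integrable (Function.uncurry fun μ x => (∏ i, gaussianPDFReal μ 1 (x i)) * F μ x)
      ((volume.restrict (Set.Icc (-R) R)).prod volume) := by
  have huncurry : Function.uncurry (fun μ x => (∏ i, gaussianPDFReal μ 1 (x i)) * F μ x)
      = fun q : ℝ × (Fin n → ℝ) => (∏ i, gaussianPDFReal q.1 1 (q.2 i)) * F q.1 q.2 := rfl
  have hFq : Measurable (fun q : ℝ × (Fin n → ℝ) => F q.1 q.2) := hF
  have hmeas : Measurable (fun q : ℝ × (Fin n → ℝ) =>
      (∏ i, gaussianPDFReal q.1 1 (q.2 i)) * F q.1 q.2) := (my_P_meas n).mul hFq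
  rw [huncurry]
  -- integrability in x for each μ in Icc
  have hInt_x : ∀ μ ∈ Set.Icc (-R) R,
      Integrable (fun x : Fin n → ℝ => (∏ i, gaussianPDFReal μ 1 (x i)) * F μ x) volume := by
    intro μ hμ
    have hdom : Integrable (fun x : Fin n → ℝ =>
        c₁ * ((∏ i, gaussianPDFReal μ 1 (x i)) * ∑ j, |x j - μ|)
          + c₂ * (∏ i, gaussianPDFReal μ 1 (x i))) volume :=
      ((my_Psum_int n μ).const_mul c₁).add ((my_P_int n μ).const_mul c₂)
    refine Integrable.mono' hdom
      ((hmeas.comp measurable_prodMk_left).aestronglyMeasurable)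
      (Filter.Eventually.of_forall fun x => ?_)
    have hPn := my_P_nonneg n μ x
    rw [Real.norm_eq_abs, abs_mul, abs_of_nonneg hPn]
    calc (∏ i, gaussianPDFReal μ 1 (x i)) * |F μ x|
        ≤ (∏ i, gaussianPDFReal μ 1 (x i)) * (c₁ * (∑ j, |x j - μ|) + c₂) :=
          mul_le_mul_of_nonneg_left (hbound μ hμ x) hPn
      _ = c₁ * ((∏ i, gaussianPDFReal μ 1 (x i)) * ∑ j, |x j - μ|)
          + c₂ * (∏ i, gaussianPDFReal μ 1 (x i)) := by ring
  refine (integrable_prod_iff hmeas.aestronglyMeasurable).mpr ⟨?_, ?_⟩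
  · filter_upwards [ae_restrict_mem measurableSet_Icc] with μ hμ
    exact hInt_x μ hμ
  · refine Integrable.mono' (integrable_const (c₁ * (n * K0) + c₂))
      (hmeas.aestronglyMeasurable.norm.integral_prod_right')
      ?_
    filter_upwards [ae_restrict_mem measurableSet_Icc] with μ hμ
    have h1 : ∀ x : Fin n → ℝ, ‖(∏ i, gaussianPDFReal μ 1 (x i)) * F μ x‖
        ≤ c₁ * ((∏ i, gaussianPDFReal μ 1 (x i)) * ∑ j, |x j - μ|)
          + c₂ * (∏ i, gaussianPDFReal μ 1 (x i)) := by
      intro x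
      have hPn := my_P_nonneg n μ x
      rw [Real.norm_eq_abs, abs_mul, abs_of_nonneg hPn]
      calc (∏ i, gaussianPDFReal μ 1 (x i)) * |F μ x|
          ≤ (∏ i, gaussianPDFReal μ 1 (x i)) * (c₁ * (∑ j, |x j - μ|) + c₂) :=
            mul_le_mul_of_nonneg_left (hbound μ hμ x) hPn
        _ = _ := by ring
    rw [Real.norm_eq_abs, abs_of_nonneg (integral_nonneg fun x => norm_nonneg _)]
    calc ∫ x : Fin n → ℝ, ‖(∏ i, gaussianPDFReal μ 1 (x i)) * F μ x‖
        ≤ ∫ x : Fin n → ℝ, (c₁ * ((∏ i, gaussianPDFReal μ 1 (x i)) * ∑ j, |x j - μ|)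
            + c₂ * (∏ i, gaussianPDFReal μ 1 (x i))) :=
          integral_mono ((hInt_x μ hμ).norm)
            (((my_Psum_int n μ).const_mul c₁).add ((my_P_int n μ).const_mul c₂)) h1
      _ = c₁ * (n * K0) + c₂ := by
          rw [integral_add (((my_Psum_int n μ).const_mul c₁)) ((my_P_int n μ).const_mul c₂),
            MeasureTheory.integral_const_mul, MeasureTheory.integral_const_mul, my_Psum_val n μ, my_P_val n μ, mul_one]

theorem my_P_cont (n : ℕ) (x : Fin n → ℝ) :
    Continuous (fun m : ℝ => ∏ i, gaussianPDFReal m 1 (x i)) := by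
  have : (fun m : ℝ => ∏ i, gaussianPDFReal m 1 (x i))
      = fun m => (Real.sqrt (2 * π))⁻¹ ^ n * Real.exp (-(∑ i, (x i - m)^2) / 2) := by
    funext m; exact my_prod_pdf_eq n m x
  rw [this]
  fun_prop

theorem my_FTC (n : ℕ) (R : ℝ) (hR : 0 ≤ R) (x : Fin n → ℝ) (c : ℝ) :
    ∫ μ in Set.Icc (-R) R,
      (∏ i, gaussianPDFReal μ 1 (x i))
        * ((R^2 - μ^2) * (c - μ) * (∑ i, (x i - μ)) + (c - μ)^2)
    = ∫ μ in Set.Icc (-R) R,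
      (∏ i, gaussianPDFReal μ 1 (x i)) * (c^2 + R^2 - 2*μ^2) := by
  set p : ℝ → ℝ := fun m => ∏ i, gaussianPDFReal m 1 (x i) with hp
  have hpc : Continuous p := my_P_cont n x
  set D : ℝ → ℝ := fun m =>
    ((-(2*m)) * (c - m) + (R^2 - m^2) * (-1)) * p m
      + (R^2 - m^2) * (c - m) * (p m * ∑ i, (x i - m)) with hD
  have hderiv : ∀ m : ℝ, HasDerivAt (fun m => (R^2 - m^2) * (c - m) * p m) (D m) m := by
    intro m
    have h1 : HasDerivAt (fun m : ℝ => R^2 - m^2) (-(2*m)) m := by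
      simpa using ((hasDerivAt_pow 2 m).const_sub (R^2))
    have h2 : HasDerivAt (fun m : ℝ => c - m) (-1) m := (hasDerivAt_id m).const_sub c
    exact (h1.mul h2).mul (my_hasDerivAt_pdf n x m)
  have hDcont : Continuous D := by
    apply Continuous.add
    · fun_prop
    · apply Continuous.mul
      · fun_prop
      · exact hpc.mul (by fun_prop)
  have key : ∀ m : ℝ, p m * ((R^2 - m^2) * (c - m) * (∑ i, (x i - m)) + (c - m)^2)
      = D m + p m * (c^2 + R^2 - 2*m^2) := by
    intro m
    simp only [hD]
    ring
  rw [integral_congr_ae (Filter.Eventually.of_forall key)]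
  have hDint : IntegrableOn D (Set.Icc (-R) R) volume := hDcont.integrableOn_Icc
  have hGint : IntegrableOn (fun m => p m * (c^2 + R^2 - 2*m^2)) (Set.Icc (-R) R) volume :=
    (hpc.mul (by fun_prop)).integrableOn_Icc
  rw [integral_add hDint hGint]
  have hD0 : ∫ m in Set.Icc (-R) R, D m = 0 := by
    rw [MeasureTheory.integral_Icc_eq_integral_Ioc,
      ← intervalIntegral.integral_of_le (by linarith : -R ≤ R),
      intervalIntegral.integral_eq_sub_of_hasDerivAt (fun m _ => hderiv m)
        (hDcont.intervalIntegrable _ _)]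
    simp [neg_sq]
  rw [hD0, zero_add]

/-- Fingerprinting lemma for Gaussians: for any `f : ℝⁿ → [−R, R]`, with `μ` uniform on
`[−R,R]` and `X₁,…,Xₙ` i.i.d. `N(μ,1)`,
`E[ (R² − μ²)·(f(X) − μ)·Σᵢ(Xᵢ − μ) + (f(X) − μ)² ] ≥ R²/3`.
The expectation over `μ` is written as an integral against the uniform density `1/(2R)`
on `[−R,R]`, and the expectation over `X` against the product Gaussian measure. -/
theorem stmt_8 (n : ℕ) (R : ℝ) (hR : 0 < R) (f : (Fin n → ℝ) → ℝ)
    (hf : ∀ x, f x ∈ Set.Icc (-R) R) (hmeas : Measurable f) :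
    (1 / (2 * R)) * ∫ μ in Set.Icc (-R) R,
      ∫ x : Fin n → ℝ,
        ((R^2 - μ^2) * (f x - μ) * (∑ i, (x i - μ)) + (f x - μ)^2)
        ∂(Measure.pi fun _ : Fin n => ProbabilityTheory.gaussianReal μ 1)
      ≥ R^2 / 3 := by
  have hmeasH : Measurable (Function.uncurry fun (μ : ℝ) (x : Fin n → ℝ) =>
      (R^2 - μ^2) * (f x - μ) * (∑ i, (x i - μ)) + (f x - μ)^2) := by
    have hfx : Measurable (fun q : ℝ × (Fin n → ℝ) => f q.2) := hmeas.comp measurable_snd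
    have h1 : Measurable (fun q : ℝ × (Fin n → ℝ) => R^2 - q.1^2) :=
      measurable_const.sub (measurable_fst.pow_const 2)
    have h2 : Measurable (fun q : ℝ × (Fin n → ℝ) => f q.2 - q.1) := hfx.sub measurable_fst
    have h3 : Measurable (fun q : ℝ × (Fin n → ℝ) => ∑ i, (q.2 i - q.1)) :=
      Finset.measurable_sum _ fun i _ =>
        ((measurable_pi_apply i).comp measurable_snd).sub measurable_fst
    exact ((h1.mul h2).mul h3).add (h2.pow_const 2)
  have hmeasG : Measurable (Function.uncurry fun (μ : ℝ) (x : Fin n → ℝ) =>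
      f x ^ 2 + R^2 - 2*μ^2) := by
    have hfx : Measurable (fun q : ℝ × (Fin n → ℝ) => f q.2) := hmeas.comp measurable_snd
    exact ((hfx.pow_const 2).add_const _).sub ((measurable_fst.pow_const 2).const_mul 2)
  have hboundH : ∀ μ ∈ Set.Icc (-R) R, ∀ x : Fin n → ℝ,
      |(R^2 - μ^2) * (f x - μ) * (∑ i, (x i - μ)) + (f x - μ)^2|
        ≤ (2*R^3) * (∑ j, |x j - μ|) + 4*R^2 := by
    intro μ hμ x
    obtain ⟨hμ1, hμ2⟩ := hμ
    obtain ⟨hf1, hf2⟩ := hf x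
    have h1 : |R^2 - μ^2| ≤ R^2 := by
      rw [abs_le]; constructor <;> nlinarith
    have h2 : |f x - μ| ≤ 2*R := by
      rw [abs_le]; constructor <;> linarith
    have h3 : |∑ i, (x i - μ)| ≤ ∑ i, |x i - μ| := Finset.abs_sum_le_sum_abs _ _
    have hs0 : (0:ℝ) ≤ ∑ i, |x i - μ| := Finset.sum_nonneg fun i _ => abs_nonneg _
    calc |(R^2 - μ^2) * (f x - μ) * (∑ i, (x i - μ)) + (f x - μ)^2|
        ≤ |(R^2 - μ^2) * (f x - μ) * (∑ i, (x i - μ))| + |(f x - μ)^2| := abs_add_le _ _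
      _ = |R^2 - μ^2| * |f x - μ| * |∑ i, (x i - μ)| + |f x - μ|^2 := by
          rw [abs_mul, abs_mul, abs_pow]
      _ ≤ R^2 * (2*R) * (∑ i, |x i - μ|) + (2*R)^2 := by
          have e1 : |R^2 - μ^2| * |f x - μ| * |∑ i, (x i - μ)|
              ≤ R^2 * (2*R) * (∑ i, |x i - μ|) := by
            apply mul_le_mul (mul_le_mul h1 h2 (abs_nonneg _) (sq_nonneg R)) h3
              (abs_nonneg _) (by positivity)
          have e2 : |f x - μ|^2 ≤ (2*R)^2 := by
            apply pow_le_pow_left₀ (abs_nonneg _) h2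
          linarith
      _ = (2*R^3) * (∑ j, |x j - μ|) + 4*R^2 := by ring
  have hboundG : ∀ μ ∈ Set.Icc (-R) R, ∀ x : Fin n → ℝ,
      |f x ^ 2 + R^2 - 2*μ^2| ≤ (0:ℝ) * (∑ j, |x j - μ|) + 4*R^2 := by
    intro μ hμ x
    obtain ⟨hμ1, hμ2⟩ := hμ
    obtain ⟨hf1, hf2⟩ := hf x
    rw [zero_mul, zero_add, abs_le]
    constructor <;> nlinarith
  have hintH := my_main_integrable n R _ hmeasH (2*R^3) (4*R^2) hboundH
  have hintG := my_main_integrable n R _ hmeasG 0 (4*R^2) hboundG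
  -- the chain of equalities
  have step1 : (∫ μ in Set.Icc (-R) R,
        ∫ x : Fin n → ℝ,
          ((R^2 - μ^2) * (f x - μ) * (∑ i, (x i - μ)) + (f x - μ)^2)
          ∂(Measure.pi fun _ : Fin n => ProbabilityTheory.gaussianReal μ 1))
      = ∫ μ in Set.Icc (-R) R, ∫ x : Fin n → ℝ,
          (∏ i, gaussianPDFReal μ 1 (x i))
            * ((R^2 - μ^2) * (f x - μ) * (∑ i, (x i - μ)) + (f x - μ)^2) :=
    integral_congr_ae (Filter.Eventually.of_forall fun μ =>
      my_integral_gaussian_pi n μ _)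
  have step2 := integral_integral_swap hintH
  have step3 : ∀ x : Fin n → ℝ,
      (∫ μ in Set.Icc (-R) R, (∏ i, gaussianPDFReal μ 1 (x i))
          * ((R^2 - μ^2) * (f x - μ) * (∑ i, (x i - μ)) + (f x - μ)^2))
      = ∫ μ in Set.Icc (-R) R, (∏ i, gaussianPDFReal μ 1 (x i))
          * (f x ^ 2 + R^2 - 2*μ^2) := fun x => my_FTC n R hR.le x (f x)
  have step4 := integral_integral_swap hintG
  have step5 : ∀ μ ∈ Set.Icc (-R) R,
      R^2 - 2*μ^2 ≤ ∫ x : Fin n → ℝ, (∏ i, gaussianPDFReal μ 1 (x i))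
        * (f x ^ 2 + R^2 - 2*μ^2) := by
    intro μ hμ
    rw [← my_integral_gaussian_pi n μ _]
    have hprob : IsProbabilityMeasure
        (Measure.pi fun _ : Fin n => ProbabilityTheory.gaussianReal μ 1) := by
      infer_instance
    have hf2int : Integrable (fun x : Fin n → ℝ => f x ^ 2)
        (Measure.pi fun _ : Fin n => ProbabilityTheory.gaussianReal μ 1) := by
      refine Integrable.mono' (integrable_const (R^2))
        ((hmeas.pow_const 2).aestronglyMeasurable)
        (Filter.Eventually.of_forall fun x => ?_)
      obtain ⟨hf1, hf2⟩ := hf x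
      rw [Real.norm_eq_abs, abs_of_nonneg (sq_nonneg _)]
      nlinarith
    have : (fun x : Fin n → ℝ => f x ^ 2 + R^2 - 2*μ^2)
        = fun x => f x ^ 2 + (R^2 - 2*μ^2) := by funext x; ring
    rw [this, integral_add hf2int (integrable_const _), integral_const]
    have h0 : 0 ≤ ∫ x : Fin n → ℝ, f x ^ 2
        ∂(Measure.pi fun _ : Fin n => ProbabilityTheory.gaussianReal μ 1) :=
      integral_nonneg fun x => sq_nonneg _
    simp only [measure_univ, ENNReal.toReal_one, probReal_univ, one_smul]
    linarith
  have step6 : ∫ μ in Set.Icc (-R) R, (R^2 - 2*μ^2) = 2*R^3/3 := by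
    rw [MeasureTheory.integral_Icc_eq_integral_Ioc,
      ← intervalIntegral.integral_of_le (by linarith : -R ≤ R)]
    have h1 : IntervalIntegrable (fun _ : ℝ => R^2) volume (-R) R :=
      intervalIntegrable_const
    have h2 : IntervalIntegrable (fun μ : ℝ => 2*μ^2) volume (-R) R := by
      apply Continuous.intervalIntegrable; fun_prop
    rw [intervalIntegral.integral_sub h1 h2, intervalIntegral.integral_const,
      intervalIntegral.integral_const_mul, integral_pow]
    simp only [smul_eq_mul]
    push_cast
    ring
  -- integrability of the outer functions
  have houter : Integrable (fun μ => ∫ x : Fin n → ℝ,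
      (∏ i, gaussianPDFReal μ 1 (x i)) * (f x ^ 2 + R^2 - 2*μ^2))
      (volume.restrict (Set.Icc (-R) R)) := hintG.integral_prod_left
  have hTbound : 2*R^3/3 ≤ ∫ μ in Set.Icc (-R) R,
      ∫ x : Fin n → ℝ,
        ((R^2 - μ^2) * (f x - μ) * (∑ i, (x i - μ)) + (f x - μ)^2)
        ∂(Measure.pi fun _ : Fin n => ProbabilityTheory.gaussianReal μ 1) := by
    rw [step1, step2]
    rw [integral_congr_ae (Filter.Eventually.of_forall step3), ← step4, ← step6]
    refine setIntegral_mono_on (by fun_prop : Continuous fun μ : ℝ => R^2 - 2*μ^2).integrableOn_Icc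
      houter measurableSet_Icc step5
  calc R^2/3 = (1/(2*R)) * (2*R^3/3) := by field_simp
    _ ≤ _ := mul_le_mul_of_nonneg_left hTbound (by positivity)
end

section
/- Group privacy / sampling amplification lemma: let M : R^{n×d} → A be an ε-differentially private mechanism, and let D, D' be probability distributions on R^d with total variation distance α. Then for every measurable S ⊆ A, Pr_{X ~ D^n}[M(X) ∈ S] ≤ exp(O(εαn)) · Pr_{X' ~ (D')^n}[M(X') ∈ S], where the constant in the O is universal (a factor of at most 2 in the exponent suffices for ε ≤ 1). -/
open MeasureTheory ProbabilityTheory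

open scoped ENNReal

section Aux

variable {Ω : Type*} [MeasurableSpace Ω]

/-- One-measure comparison: if `g` is bounded by `1`, satisfies the pointwise DP-type
condition `g x ≤ e^ε * g y` for all `x, y`, and `μ S ≤ ν S + a` for all measurable `S`,
then `∫ g dμ ≤ (1 + a (e^ε - 1)) ∫ g dν`. -/
lemma lemA (μ ν : Measure Ω) [IsProbabilityMeasure μ] [IsProbabilityMeasure ν]
    (g : Ω → ℝ≥0∞) (hg : Measurable g) (hg1 : ∀ x, g x ≤ 1)
    (ε a : ℝ) (hε0 : 0 ≤ ε) (ha : 0 ≤ a)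
    (hDP : ∀ x y, g x ≤ ENNReal.ofReal (Real.exp ε) * g y)
    (hle : ∀ S : Set Ω, MeasurableSet S → μ S ≤ ν S + ENNReal.ofReal a) :
    ∫⁻ x, g x ∂μ ≤ ENNReal.ofReal (1 + a * (Real.exp ε - 1)) * ∫⁻ x, g x ∂ν := by
  haveI hΩ : Nonempty Ω := by
    rcases isEmpty_or_nonempty Ω with h | h
    · have h1 : μ Set.univ = 1 := measure_univ
      rw [Set.univ_eq_empty_iff.2 h, measure_empty] at h1
      exact absurd h1 (by norm_num)
    · exact h
  set E : ℝ≥0∞ := ENNReal.ofReal (Real.exp ε) with hE_def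
  have hEne : E ≠ ∞ := ENNReal.ofReal_ne_top
  set c : ℝ≥0∞ := ⨅ y, g y with hc_def
  have hc_le : ∀ x, c ≤ g x := fun x => iInf_le _ x
  have hc1 : c ≤ 1 := le_trans (hc_le (Classical.arbitrary Ω)) (hg1 _)
  have hcne : c ≠ ∞ := (lt_of_le_of_lt hc1 ENNReal.one_lt_top).ne
  have hgE : ∀ x, g x ≤ E * c := by
    intro x
    have h1 : g x ≤ ⨅ y, E * g y := le_iInf fun y => hDP x y
    rwa [← ENNReal.mul_iInf (fun h => absurd h hEne)] at h1
  set h : Ω → ℝ≥0∞ := fun x => g x - c with hh_def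
  have hmh : Measurable h := hg.sub measurable_const
  set B : ℝ≥0∞ := (E - 1) * c with hB_def
  have hBne : B ≠ ∞ :=
    ENNReal.mul_ne_top ((tsub_le_self.trans_lt (lt_top_iff_ne_top.2 hEne)).ne) hcne
  have hhB : ∀ x, h x ≤ B := by
    intro x
    have h1 : g x - c ≤ E * c - c := tsub_le_tsub (hgE x) le_rfl
    have h2 : E * c - c = (E - 1) * c := by
      rw [ENNReal.sub_mul (fun _ _ => hcne), one_mul]
    rw [hh_def]; dsimp only; rw [h2] at h1; exact h1
  have hh_fin : ∀ x, h x ≠ ∞ := fun x => (lt_of_le_of_lt (hhB x)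
    (lt_top_iff_ne_top.2 hBne)).ne
  -- split g = h + c
  have hsplit : ∀ (ρ : Measure Ω), IsProbabilityMeasure ρ →
      ∫⁻ x, g x ∂ρ = ∫⁻ x, h x ∂ρ + c := by
    intro ρ hρ
    have h1 : ∫⁻ x, g x ∂ρ = ∫⁻ x, (h x + c) ∂ρ :=
      lintegral_congr fun x => (tsub_add_cancel_of_le (hc_le x)).symm
    rw [h1, lintegral_add_right _ measurable_const, lintegral_const, measure_univ, mul_one]
  -- layer cake comparison for h
  set hr : Ω → ℝ := fun x => (h x).toReal with hr_def
  have hmhr : Measurable hr := hmh.ennreal_toReal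
  set B' : ℝ := B.toReal with hB'_def
  have hB'0 : 0 ≤ B' := ENNReal.toReal_nonneg
  have hsets : ∀ t : ℝ, MeasurableSet {x | t < hr x} :=
    fun t => measurableSet_lt measurable_const hmhr
  have hempty : ∀ t : ℝ, B' ≤ t → {x | t < hr x} = ∅ := by
    intro t ht
    ext x
    simp only [Set.mem_setOf_eq, Set.mem_empty_iff_false, iff_false, not_lt]
    exact le_trans (le_trans (ENNReal.toReal_mono hBne (hhB x)) ht) le_rfl
  have hlayer : ∀ (ρ : Measure Ω), IsProbabilityMeasure ρ →
      ∫⁻ x, h x ∂ρ = ∫⁻ t in Set.Ioi (0:ℝ), ρ {x | t < hr x} := by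
    intro ρ hρ
    have h1 : ∫⁻ x, h x ∂ρ = ∫⁻ x, ENNReal.ofReal (hr x) ∂ρ :=
      lintegral_congr fun x => (ENNReal.ofReal_toReal (hh_fin x)).symm
    rw [h1, lintegral_eq_lintegral_meas_lt ρ (Filter.Eventually.of_forall
      fun x => ENNReal.toReal_nonneg) hmhr.aemeasurable]
  have hsplitIoi : ∀ (ρ : Measure Ω),
      ∫⁻ t in Set.Ioi (0:ℝ), ρ {x | t < hr x}
        = (∫⁻ t in Set.Ioc (0:ℝ) B', ρ {x | t < hr x})
          + ∫⁻ t in Set.Ioi B', ρ {x | t < hr x} := by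
    intro ρ
    have h1 := lintegral_union (f := fun t => ρ {x | t < hr x}) (μ := volume)
      (measurableSet_Ioi (a := B'))
      ((Set.Ioc_disjoint_Ioi (le_refl B')) :
        Disjoint (Set.Ioc (0:ℝ) B') (Set.Ioi B'))
    rw [Set.Ioc_union_Ioi_eq_Ioi hB'0] at h1
    simpa only [] using h1
  have htail : ∀ (ρ : Measure Ω), ∫⁻ t in Set.Ioi B', ρ {x | t < hr x} = 0 := by
    intro ρ
    have h1 : ∫⁻ t in Set.Ioi B', ρ {x | t < hr x}
        = ∫⁻ _t in Set.Ioi B', (0:ℝ≥0∞) := by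
      apply setLIntegral_congr_fun measurableSet_Ioi
      exact fun t ht => show ρ {x | t < hr x} = 0 by
        rw [hempty t (le_of_lt ht), measure_empty]
    rw [h1, lintegral_zero]
  have hkey : ∫⁻ x, h x ∂μ ≤ ∫⁻ x, h x ∂ν + ENNReal.ofReal a * B := by
    rw [hlayer μ inferInstance, hsplitIoi μ, htail μ]
    simp only [add_zero]
    have h2 : ∫⁻ t in Set.Ioc (0:ℝ) B', μ {x | t < hr x}
        ≤ ∫⁻ t in Set.Ioc (0:ℝ) B', (ν {x | t < hr x} + ENNReal.ofReal a) :=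
      lintegral_mono fun t => hle _ (hsets t)
    have h3 : ∫⁻ t in Set.Ioc (0:ℝ) B', (ν {x | t < hr x} + ENNReal.ofReal a)
        = (∫⁻ t in Set.Ioc (0:ℝ) B', ν {x | t < hr x}) + ENNReal.ofReal a * B := by
      rw [lintegral_add_right _ measurable_const, setLIntegral_const,
        Real.volume_Ioc, sub_zero, hB'_def, ENNReal.ofReal_toReal hBne]
    have h4 : ∫⁻ t in Set.Ioc (0:ℝ) B', ν {x | t < hr x}
        ≤ ∫⁻ t in Set.Ioi (0:ℝ), ν {x | t < hr x} :=
      lintegral_mono_set Set.Ioc_subset_Ioi_self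
    calc ∫⁻ t in Set.Ioc (0:ℝ) B', μ {x | t < hr x}
        ≤ (∫⁻ t in Set.Ioc (0:ℝ) B', ν {x | t < hr x}) + ENNReal.ofReal a * B := by
          rw [← h3]; exact h2
      _ ≤ (∫⁻ t in Set.Ioi (0:ℝ), ν {x | t < hr x}) + ENNReal.ofReal a * B :=
          add_le_add_left h4 _
      _ = ∫⁻ x, h x ∂ν + ENNReal.ofReal a * B := by rw [hlayer ν inferInstance]
  -- c ≤ ∫ g dν
  have hcint : c ≤ ∫⁻ x, g x ∂ν := by
    calc c = ∫⁻ _x, c ∂ν := by rw [lintegral_const, measure_univ, mul_one]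
      _ ≤ ∫⁻ x, g x ∂ν := lintegral_mono hc_le
  -- put together
  have hEm1 : ENNReal.ofReal (Real.exp ε - 1) = E - 1 := by
    rw [hE_def, ← ENNReal.ofReal_one, ← ENNReal.ofReal_sub _ zero_le_one]
  have hK : ENNReal.ofReal (1 + a * (Real.exp ε - 1))
      = 1 + ENNReal.ofReal a * (E - 1) := by
    rw [ENNReal.ofReal_add zero_le_one (mul_nonneg ha (by
      have := Real.one_le_exp hε0; linarith)), ENNReal.ofReal_one,
      ENNReal.ofReal_mul ha, hEm1]
  calc ∫⁻ x, g x ∂μ = ∫⁻ x, h x ∂μ + c := hsplit μ inferInstance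
    _ ≤ (∫⁻ x, h x ∂ν + ENNReal.ofReal a * B) + c := add_le_add_left hkey _
    _ = (∫⁻ x, h x ∂ν + c) + ENNReal.ofReal a * B := by ring
    _ = ∫⁻ x, g x ∂ν + ENNReal.ofReal a * ((E - 1) * c) := by
        rw [← hsplit ν inferInstance, hB_def]
    _ ≤ ∫⁻ x, g x ∂ν + ENNReal.ofReal a * ((E - 1) * ∫⁻ x, g x ∂ν) := by
        exact add_le_add_right (mul_le_mul_right (mul_le_mul_right hcint _) _) _
    _ = (1 + ENNReal.ofReal a * (E - 1)) * ∫⁻ x, g x ∂ν := by ring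
    _ = ENNReal.ofReal (1 + a * (Real.exp ε - 1)) * ∫⁻ x, g x ∂ν := by rw [hK]

/-- One-coordinate swap for product measures. -/
lemma pi_step {n : ℕ} {EE : Type*} [MeasurableSpace EE] (f : (Fin n → EE) → ℝ≥0∞)
    (hf : Measurable f) (hf1 : ∀ X, f X ≤ 1)
    (ε a : ℝ) (hε0 : 0 ≤ ε) (ha : 0 ≤ a)
    (hDP : ∀ X X' : Fin n → EE, (∃ i, ∀ j, j ≠ i → X j = X' j) →
      f X ≤ ENNReal.ofReal (Real.exp ε) * f X')
    (μ ν : Fin n → Measure EE) (h1 : ∀ i, IsProbabilityMeasure (μ i))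
    (h2 : ∀ i, IsProbabilityMeasure (ν i))
    (i : Fin n) (hoff : ∀ j, j ≠ i → μ j = ν j)
    (hi : ∀ S : Set EE, MeasurableSet S → μ i S ≤ ν i S + ENNReal.ofReal a) :
    ∫⁻ X, f X ∂(Measure.pi μ) ≤
      ENNReal.ofReal (1 + a * (Real.exp ε - 1)) * ∫⁻ X, f X ∂(Measure.pi ν) := by
  haveI := h1; haveI := h2
  cases n with
  | zero => exact i.elim0
  | succ m =>
    set e := MeasurableEquiv.piFinSuccAbove (fun _ : Fin (m + 1) => EE) i with he_def
    have hesymm : ∀ (p : EE × (Fin m → EE)), e.symm p = i.insertNth p.1 p.2 := by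
      intro p
      rfl
    have hμp := measurePreserving_piFinSuccAbove μ i
    have hνp := measurePreserving_piFinSuccAbove ν i
    have hfm : Measurable (fun p : EE × (Fin m → EE) => f (e.symm p)) :=
      hf.comp e.symm.measurable
    have keyμ : ∫⁻ X, f X ∂(Measure.pi μ)
        = ∫⁻ p, f (e.symm p) ∂((μ i).prod (Measure.pi fun j => μ (i.succAbove j))) := by
      rw [← hμp.lintegral_comp hfm]
      exact lintegral_congr fun x => (congrArg f (e.symm_apply_apply x)).symm
    have keyν : ∫⁻ X, f X ∂(Measure.pi ν)
        = ∫⁻ p, f (e.symm p) ∂((ν i).prod (Measure.pi fun j => ν (i.succAbove j))) := by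
      rw [← hνp.lintegral_comp hfm]
      exact lintegral_congr fun x => (congrArg f (e.symm_apply_apply x)).symm
    have hrest : (Measure.pi fun j => μ (i.succAbove j))
        = Measure.pi fun j => ν (i.succAbove j) := by
      congr 1
      funext j
      exact hoff _ (Fin.succAbove_ne i j)
    haveI : ∀ j, IsProbabilityMeasure (ν (i.succAbove j)) := fun j => h2 _
    have hinner : ∀ y : Fin m → EE,
        ∫⁻ x, f (e.symm (x, y)) ∂(μ i)
          ≤ ENNReal.ofReal (1 + a * (Real.exp ε - 1)) * ∫⁻ x, f (e.symm (x, y)) ∂(ν i) := by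
      intro y
      apply lemA (μ i) (ν i) _ (hfm.comp (measurable_id.prodMk measurable_const))
        (fun x => hf1 _) ε a hε0 ha _ hi
      intro x x'
      apply hDP
      refine ⟨i, fun j hj => ?_⟩
      obtain ⟨k, rfl⟩ := Fin.exists_succAbove_eq hj
      rw [hesymm, hesymm]
      simp [Fin.insertNth_apply_succAbove]
    set K := ENNReal.ofReal (1 + a * (Real.exp ε - 1)) with hK_def
    have hKne : K ≠ ∞ := ENNReal.ofReal_ne_top
    calc ∫⁻ X, f X ∂(Measure.pi μ)
        = ∫⁻ y, ∫⁻ x, f (e.symm (x, y)) ∂(μ i)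
            ∂(Measure.pi fun j => μ (i.succAbove j)) := by
          rw [keyμ, lintegral_prod_symm _ hfm.aemeasurable]
      _ ≤ ∫⁻ y, K * ∫⁻ x, f (e.symm (x, y)) ∂(ν i)
            ∂(Measure.pi fun j => μ (i.succAbove j)) := lintegral_mono fun y => hinner y
      _ = K * ∫⁻ y, ∫⁻ x, f (e.symm (x, y)) ∂(ν i)
            ∂(Measure.pi fun j => ν (i.succAbove j)) := by
          rw [hrest, lintegral_const_mul' _ _ hKne]
      _ = K * ∫⁻ X, f X ∂(Measure.pi ν) := by
          rw [keyν, lintegral_prod_symm _ hfm.aemeasurable]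

end Aux

/-- Group privacy / sampling amplification: if `M` is an `ε`-DP mechanism (`ε ≤ 1`)
and `D, D'` are distributions on `ℝ^d` at total variation distance at most `α`, then
for every measurable event `S`,
`Pr_{X ~ Dⁿ}[M(X) ∈ S] ≤ exp(2εαn) · Pr_{X' ~ (D')ⁿ}[M(X') ∈ S]`. -/
theorem stmt_11 {d : ℕ} {A : Type*} [MeasurableSpace A]
    (n : ℕ) (M : Kernel (Fin n → (Fin d → ℝ)) A) [IsMarkovKernel M]
    (ε : ℝ) (hε0 : 0 ≤ ε) (hε1 : ε ≤ 1)
    (hDP : ∀ (X X' : Fin n → (Fin d → ℝ)), (∃ i, ∀ j, j ≠ i → X j = X' j) →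
      ∀ S : Set A, MeasurableSet S → M X S ≤ ENNReal.ofReal (Real.exp ε) * M X' S)
    (D D' : Measure (Fin d → ℝ)) [IsProbabilityMeasure D] [IsProbabilityMeasure D']
    (α : ℝ)
    (hα : ∀ S : Set (Fin d → ℝ), MeasurableSet S → |(D S).toReal - (D' S).toReal| ≤ α) :
    ∀ S : Set A, MeasurableSet S →
      ∫⁻ X, M X S ∂(Measure.pi fun _ : Fin n => D)
        ≤ ENNReal.ofReal (Real.exp (2 * ε * α * n)) *
            ∫⁻ X, M X S ∂(Measure.pi fun _ : Fin n => D') := by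
  intro S hS
  have ha : 0 ≤ α := le_trans (abs_nonneg _) (hα ∅ MeasurableSet.empty)
  have hexp1 : (1:ℝ) ≤ Real.exp ε := Real.one_le_exp hε0
  set f : (Fin n → (Fin d → ℝ)) → ℝ≥0∞ := fun X => M X S with hf_def
  have hf : Measurable f := Kernel.measurable_coe M hS
  have hf1 : ∀ X, f X ≤ 1 := fun X => prob_le_one
  set K := ENNReal.ofReal (1 + α * (Real.exp ε - 1)) with hK_def
  set μs : ℕ → Fin n → Measure (Fin d → ℝ) :=
    fun k i => if (i : ℕ) < k then D else D' with hμs_def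
  have hprob : ∀ k i, IsProbabilityMeasure (μs k i) := by
    intro k i
    rw [hμs_def]
    dsimp only
    split_ifs <;> infer_instance
  have hDD' : ∀ T : Set (Fin d → ℝ), MeasurableSet T →
      D T ≤ D' T + ENNReal.ofReal α := by
    intro T hT
    have h1 := (abs_le.1 (hα T hT)).2
    have h2 : (D T).toReal ≤ (D' T).toReal + α := by linarith
    calc D T = ENNReal.ofReal ((D T).toReal) :=
          (ENNReal.ofReal_toReal (measure_ne_top D T)).symm
      _ ≤ ENNReal.ofReal ((D' T).toReal + α) := ENNReal.ofReal_le_ofReal h2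
      _ = ENNReal.ofReal ((D' T).toReal) + ENNReal.ofReal α :=
          ENNReal.ofReal_add ENNReal.toReal_nonneg ha
      _ = D' T + ENNReal.ofReal α := by
          rw [ENNReal.ofReal_toReal (measure_ne_top D' T)]
  have hchain : ∀ k, k ≤ n →
      ∫⁻ X, f X ∂(Measure.pi (μs k)) ≤ K ^ k * ∫⁻ X, f X ∂(Measure.pi (μs 0)) := by
    intro k
    induction k with
    | zero => intro _; simp
    | succ k ih =>
      intro hk
      have hk' : k < n := hk
      have step : ∫⁻ X, f X ∂(Measure.pi (μs (k + 1)))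
          ≤ K * ∫⁻ X, f X ∂(Measure.pi (μs k)) := by
        apply pi_step f hf hf1 ε α hε0 ha
          (fun X X' hne => hDP X X' hne S hS)
          (μs (k + 1)) (μs k) (hprob _) (hprob _) ⟨k, hk'⟩
        · intro j hj
          have hjk : (j : ℕ) ≠ k := fun h => hj (Fin.ext h)
          rw [hμs_def]
          dsimp only
          by_cases h : (j : ℕ) < k
          · rw [if_pos (Nat.lt_succ_of_lt h), if_pos h]
          · rw [if_neg (by omega), if_neg h]
        · intro T hT
          rw [hμs_def]
          dsimp only
          rw [if_pos (Nat.lt_succ_self k), if_neg (lt_irrefl k)]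
          exact hDD' T hT
      calc ∫⁻ X, f X ∂(Measure.pi (μs (k + 1)))
          ≤ K * ∫⁻ X, f X ∂(Measure.pi (μs k)) := step
        _ ≤ K * (K ^ k * ∫⁻ X, f X ∂(Measure.pi (μs 0))) :=
            mul_le_mul_right (ih (le_of_lt hk')) _
        _ = K ^ (k + 1) * ∫⁻ X, f X ∂(Measure.pi (μs 0)) := by ring
  have hn := hchain n le_rfl
  have e1 : μs n = fun _ : Fin n => D := funext fun i => if_pos i.isLt
  have e0 : μs 0 = fun _ : Fin n => D' := funext fun i => if_neg (Nat.not_lt_zero _)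
  rw [e1, e0] at hn
  refine hn.trans (mul_le_mul_left ?_ _)
  -- K ^ n ≤ ofReal (exp (2 ε α n))
  have h1 : (0:ℝ) ≤ 1 + α * (Real.exp ε - 1) := by nlinarith
  rw [hK_def, ← ENNReal.ofReal_pow h1]
  apply ENNReal.ofReal_le_ofReal
  have hconv : Real.exp ε ≤ 1 + 2 * ε := by
    have hc := convexOn_exp.2 (Set.mem_univ (0:ℝ)) (Set.mem_univ (1:ℝ))
      (by linarith : (0:ℝ) ≤ 1 - ε) hε0 (by ring)
    simp only [smul_eq_mul, mul_zero, mul_one, zero_add, Real.exp_zero] at hc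
    have he3 : Real.exp 1 < 2.7182818286 := Real.exp_one_lt_d9
    nlinarith
  have hbase : 1 + α * (Real.exp ε - 1) ≤ Real.exp (2 * ε * α) := by
    have h2 : 1 + α * (Real.exp ε - 1) ≤ 1 + 2 * ε * α := by nlinarith
    have h3 : 2 * ε * α + 1 ≤ Real.exp (2 * ε * α) := Real.add_one_le_exp _
    linarith
  calc (1 + α * (Real.exp ε - 1)) ^ n ≤ (Real.exp (2 * ε * α)) ^ n :=
      pow_le_pow_left₀ h1 hbase n
    _ = Real.exp (2 * ε * α * n) := by
        rw [show 2 * ε * α * (n:ℝ) = (n:ℝ) * (2 * ε * α) by ring, Real.exp_nat_mul]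
end
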